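/- There exists a unique ring homomorphism θ : W(E⁺) → O such that for every x ∈ E⁺, every n ≥ 0, and every a ∈ O lifting the n-th component x_n ∈ O/pO of x, one has θ([x]) ≡ a^{p^n} (mod p^{n+1}O). (This is Fontaine's map θ on A⁺ = W(E⁺), which sends Teichmüller lifts [x] to θ̄(x).) -/

import Mathlib

open scoped NNReal

namespace FontaineThetaAux

open WittVector

section Aux

variable (p : ℕ) [Fact p.Prime]
    (O : Type*) [CommRing O]
    [Fact (¬IsUnit (p : O))]

local notation "R" => ModP O p
local notation "E" => PreTilt O p
local notation "mkO" => Ideal.Quotient.mk (Ideal.span {(p : O)})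

/-- Congruence of ghost components for coefficientwise congruent Witt vectors. -/
theorem ghost_congr {n : ℕ} {Z W : WittVector p O}
    (h : ∀ i, i ≤ n → (p : O) ∣ Z.coeff i - W.coeff i) :
    (p : O) ^ (n + 1) ∣ ghostComponent n Z - ghostComponent n W := by
  rw [WittVector.ghostComponent_apply, WittVector.ghostComponent_apply,
    aeval_wittPolynomial, aeval_wittPolynomial, ← Finset.sum_sub_distrib]
  apply Finset.dvd_sum
  intro i hi
  rw [Finset.mem_range, Nat.lt_succ_iff] at hi
  have h2 := dvd_sub_pow_of_dvd_sub (h i hi) (n - i)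
  rw [← mul_sub]
  have hpow : (p : O) ^ (n + 1) = (p : O) ^ i * (p : O) ^ (n - i + 1) := by
    rw [← pow_add]; congr 1; omega
  rw [hpow]
  exact mul_dvd_mul_left _ h2

/-- A set-theoretic lift to `W(O)` of the image in `W(O/p)` of `x : W(E)` under the
`n`-th Perfection component. -/
noncomputable def wlift (n : ℕ) (x : WittVector p E) : WittVector p O :=
  WittVector.mk p fun i => (Ideal.Quotient.mk_surjective (Perfection.coeff R p n (x.coeff i))).choose

theorem wlift_spec (n : ℕ) (x : WittVector p E) (i : ℕ) :
    mkO ((wlift p O n x).coeff i) = Perfection.coeff R p n (x.coeff i) :=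
  (Ideal.Quotient.mk_surjective (Perfection.coeff R p n (x.coeff i))).choose_spec

/-- The `n`-th approximation to Fontaine's θ. -/
noncomputable def thetaAux (n : ℕ) (x : WittVector p E) : O :=
  ghostComponent n (wlift p O n x)

/-- The approximation does not depend (mod `p^(n+1)`) on the chosen lift. -/
theorem thetaAux_indep {n : ℕ} {x : WittVector p E} {Z : WittVector p O}
    (h : ∀ i, i ≤ n → mkO (Z.coeff i) = Perfection.coeff R p n (x.coeff i)) :
    (p : O) ^ (n + 1) ∣ ghostComponent n Z - thetaAux p O n x := by
  apply ghost_congr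
  intro i hi
  have := (h i hi).trans (wlift_spec p O n x i).symm
  rwa [Ideal.Quotient.mk_eq_mk_iff_sub_mem, Ideal.mem_span_singleton] at this

theorem thetaAux_succ (n : ℕ) (x : WittVector p E) :
    (p : O) ^ (n + 1) ∣ thetaAux p O (n + 1) x - thetaAux p O n x := by
  set Z := wlift p O (n + 1) x with hZ
  set Z' : WittVector p O := WittVector.mk p fun i => (Z.coeff i) ^ p with hZ'
  have h1 : (p : O) ^ (n + 1) ∣ ghostComponent n Z' - thetaAux p O n x := by
    apply thetaAux_indep
    intro i _
    have : mkO (Z'.coeff i) = (mkO (Z.coeff i)) ^ p := by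
      simp [hZ', WittVector.mk]
    rw [this, wlift_spec]
    exact Perfection.coeff_pow_p' (x.coeff i) n
  have hterms : ∀ i ∈ Finset.range (n + 1),
      (p : O) ^ i * Z.coeff i ^ p ^ (n + 1 - i) = (p : O) ^ i * Z'.coeff i ^ p ^ (n - i) := by
    intro i hi
    rw [Finset.mem_range, Nat.lt_succ_iff] at hi
    have hc : Z'.coeff i = Z.coeff i ^ p := rfl
    rw [hc, ← pow_mul]
    congr 2
    rw [← pow_succ']
    congr 1
    omega
  have h3 : (p : O) ^ (n + 1) ∣ ghostComponent (n + 1) Z - ghostComponent n Z' := by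
    rw [WittVector.ghostComponent_apply, WittVector.ghostComponent_apply,
      aeval_wittPolynomial, aeval_wittPolynomial, Finset.sum_range_succ,
      Finset.sum_congr rfl hterms, add_sub_cancel_left]
    exact Dvd.intro _ rfl
  have : thetaAux p O (n + 1) x - thetaAux p O n x
      = (ghostComponent (n + 1) Z - ghostComponent n Z')
        + (ghostComponent n Z' - thetaAux p O n x) := by
    simp only [thetaAux, hZ]; ring
  rw [this]
  exact dvd_add h3 h1

theorem thetaAux_le {n m : ℕ} (hnm : n ≤ m) (x : WittVector p E) :
    (p : O) ^ (n + 1) ∣ thetaAux p O m x - thetaAux p O n x := by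
  induction m with
  | zero =>
    obtain rfl : n = 0 := Nat.le_zero.mp hnm
    simp
  | succ m ih =>
    by_cases h : n = m + 1
    · subst h; simp
    · have h' : n ≤ m := by omega
      have ha := ih h'
      have hb := thetaAux_succ p O m x
      have hb' : (p : O) ^ (n + 1) ∣ thetaAux p O (m + 1) x - thetaAux p O m x :=
        dvd_trans (pow_dvd_pow _ (by omega)) hb
      have : thetaAux p O (m + 1) x - thetaAux p O n x
          = (thetaAux p O (m + 1) x - thetaAux p O m x)
            + (thetaAux p O m x - thetaAux p O n x) := by ring
      rw [this]; exact dvd_add hb' ha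

theorem thetaAux_add (n : ℕ) (x y : WittVector p E) :
    (p : O) ^ (n + 1) ∣
      thetaAux p O n (x + y) - (thetaAux p O n x + thetaAux p O n y) := by
  set Z : WittVector p O := wlift p O n x + wlift p O n y with hZ
  have hcond : ∀ i, i ≤ n → mkO (Z.coeff i) = Perfection.coeff R p n ((x + y).coeff i) := by
    intro i _
    have h1 : WittVector.map mkO Z
        = WittVector.map (PreTilt.coeff n : E →+* R) (x + y) := by
      rw [hZ, map_add, map_add]
      congr 1 <;> (ext j; rw [WittVector.map_coeff, WittVector.map_coeff, wlift_spec]; rfl)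
    have := congrArg (fun z => WittVector.coeff z i) h1
    simpa only [WittVector.map_coeff, PreTilt.coeff_def] using this
  have h := thetaAux_indep p O hcond
  have hg : ghostComponent n Z
      = thetaAux p O n x + thetaAux p O n y := by
    rw [hZ, map_add]; rfl
  rw [hg] at h
  have : thetaAux p O n (x + y)
      - (thetaAux p O n x + thetaAux p O n y)
      = -((thetaAux p O n x + thetaAux p O n y)
          - thetaAux p O n (x + y)) := by ring
  rw [this]
  exact (dvd_neg).mpr h

theorem thetaAux_mul (n : ℕ) (x y : WittVector p E) :
    (p : O) ^ (n + 1) ∣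
      thetaAux p O n (x * y) - (thetaAux p O n x * thetaAux p O n y) := by
  set Z : WittVector p O := wlift p O n x * wlift p O n y with hZ
  have hcond : ∀ i, i ≤ n → mkO (Z.coeff i) = Perfection.coeff R p n ((x * y).coeff i) := by
    intro i _
    have h1 : WittVector.map mkO Z
        = WittVector.map (PreTilt.coeff n : E →+* R) (x * y) := by
      rw [hZ, map_mul, map_mul]
      congr 1 <;> (ext j; rw [WittVector.map_coeff, WittVector.map_coeff, wlift_spec]; rfl)
    have := congrArg (fun z => WittVector.coeff z i) h1
    simpa only [WittVector.map_coeff, PreTilt.coeff_def] using this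
  have h := thetaAux_indep p O hcond
  have hg : ghostComponent n Z
      = thetaAux p O n x * thetaAux p O n y := by
    rw [hZ, map_mul]; rfl
  rw [hg] at h
  have : thetaAux p O n (x * y)
      - (thetaAux p O n x * thetaAux p O n y)
      = -((thetaAux p O n x * thetaAux p O n y)
          - thetaAux p O n (x * y)) := by ring
  rw [this]
  exact (dvd_neg).mpr h

theorem thetaAux_one (n : ℕ) :
    (p : O) ^ (n + 1) ∣ thetaAux p O n (1 : WittVector p E) - 1 := by
  have hcond : ∀ i, i ≤ n →
      mkO ((1 : WittVector p O).coeff i) = Perfection.coeff R p n ((1 : WittVector p E).coeff i) := by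
    intro i _
    have h1 : WittVector.map mkO (1 : WittVector p O)
        = WittVector.map (PreTilt.coeff n : E →+* R) (1 : WittVector p E) := by
      rw [map_one, map_one]
    have := congrArg (fun z => WittVector.coeff z i) h1
    simpa only [WittVector.map_coeff, PreTilt.coeff_def] using this
  have h := thetaAux_indep p O hcond
  rw [map_one] at h
  have : thetaAux p O n (1 : WittVector p E) - 1
      = -((1 : O) - thetaAux p O n (1 : WittVector p E)) := by ring
  rw [this]
  exact (dvd_neg).mpr h

theorem thetaAux_zero (n : ℕ) :
    (p : O) ^ (n + 1) ∣ thetaAux p O n (0 : WittVector p E) := by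
  have hcond : ∀ i, i ≤ n →
      mkO ((0 : WittVector p O).coeff i) = Perfection.coeff R p n ((0 : WittVector p E).coeff i) := by
    intro i _
    have h1 : WittVector.map mkO (0 : WittVector p O)
        = WittVector.map (PreTilt.coeff n : E →+* R) (0 : WittVector p E) := by
      rw [map_zero, map_zero]
    have := congrArg (fun z => WittVector.coeff z i) h1
    simpa only [WittVector.map_coeff, PreTilt.coeff_def] using this
  have h := thetaAux_indep p O hcond
  rw [map_zero, zero_sub, dvd_neg] at h
  exact h

theorem thetaAux_teichmuller (n : ℕ) (x : E) (a : O)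
    (ha : mkO a = Perfection.coeff R p n x) :
    (p : O) ^ (n + 1) ∣ a ^ p ^ n - thetaAux p O n (teichmuller p x) := by
  have hcond : ∀ i, i ≤ n →
      mkO ((teichmuller p a).coeff i) = Perfection.coeff R p n ((teichmuller p x).coeff i) := by
    intro i _
    have h1 : WittVector.map mkO (teichmuller p a)
        = WittVector.map (PreTilt.coeff n : E →+* R) (teichmuller p x) := by
      rw [WittVector.map_teichmuller, WittVector.map_teichmuller, ha]
      rfl
    have := congrArg (fun z => WittVector.coeff z i) h1
    simpa only [WittVector.map_coeff, PreTilt.coeff_def] using this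
  have h := thetaAux_indep p O hcond
  rwa [ghostComponent_teichmuller] at h

/-- Decomposition of a Witt vector over a perfect ring. -/
theorem exists_teichmuller_add_p_mul (y : WittVector p E) :
    ∃ w : WittVector p E, y = teichmuller p (y.coeff 0) + p * w := by
  have ghost0 : ∀ z : WittVector p E, ghostComponent 0 z = z.coeff 0 := by
    intro z
    rw [WittVector.ghostComponent_apply, wittPolynomial_zero, MvPolynomial.aeval_X]
  set d : WittVector p E := y - teichmuller p (y.coeff 0) with hd
  have hd0 : d.coeff 0 = 0 := by
    rw [← ghost0 d, hd, map_sub, ghost0, ghost0, teichmuller_coeff_zero, sub_self]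
  set z : WittVector p E := WittVector.mk p fun i => d.coeff (i + 1) with hz
  have hVz : verschiebung z = d := by
    ext i
    cases i with
    | zero => rw [verschiebung_coeff_zero, hd0]
    | succ i => rw [verschiebung_coeff_succ]; rfl
  refine ⟨(frobeniusEquiv p E).symm z, ?_⟩
  have hfrob : frobenius ((frobeniusEquiv p E).symm z) = z := by
    have := (frobeniusEquiv p E).apply_symm_apply z
    rwa [WittVector.frobeniusEquiv_apply] at this
  have hVF := verschiebung_frobenius ((frobeniusEquiv p E).symm z)
  rw [hfrob, hVz] at hVF
  have hgoal : teichmuller p (y.coeff 0) + (p : WittVector p E) * ((frobeniusEquiv p E).symm z)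
      = y := by
    rw [mul_comm ((p : WittVector p E)) ((frobeniusEquiv p E).symm z), ← hVF, hd]
    ring
  exact hgoal.symm

end Aux

end FontaineThetaAux

open FontaineThetaAux WittVector

/-- Fontaine's map `θ : A⁺ = W(E⁺) → O`: there is a unique ring homomorphism
`θ : W(E⁺) → O` such that for every `x ∈ E⁺`, every `n`, and every lift `a ∈ O` of the
`n`-th component of `x`, one has `θ([x]) ≡ a^(pⁿ) (mod p^(n+1) O)`. -/
theorem fontaine_theta_existsUnique
    (p : ℕ) [Fact p.Prime]
    (K : Type*) [Field K] (v : Valuation K ℝ≥0)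
    (O : Type*) [CommRing O] [Algebra O K] (hv : v.Integers O)
    [Fact (v p ≠ 1)]
    [IsAdicComplete (Ideal.span {(p : O)}) O] :
    haveI : Fact ¬IsUnit (p : O) :=
      Fact.mk <| mt hv.one_of_isUnit <| (map_natCast (algebraMap O K) p).symm ▸ (‹Fact (v p ≠ 1)›).1
    ∃! θ : WittVector p (PreTilt O p) →+* O,
      ∀ (x : PreTilt O p) (n : ℕ) (a : O),
        (Ideal.Quotient.mk (Ideal.span {(p : O)}) a : ModP O p) =
            Perfection.coeff (ModP O p) p n x →
          (p : O) ^ (n + 1) ∣ θ (WittVector.teichmuller p x) - a ^ p ^ n := by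
  haveI : Fact ¬IsUnit (p : O) :=
    Fact.mk <| mt hv.one_of_isUnit <| (map_natCast (algebraMap O K) p).symm ▸ (‹Fact (v p ≠ 1)›).1
  classical
  set I : Ideal O := Ideal.span {(p : O)} with hI
  -- translation between `SModEq` and divisibility
  have smod_iff : ∀ (m : ℕ) (a b : O),
      (a ≡ b [SMOD (I ^ m • ⊤ : Submodule O O)]) ↔ (p : O) ^ m ∣ a - b := by
    intro m a b
    rw [SModEq.sub_mem, smul_eq_mul, Ideal.mul_top, hI, Ideal.span_singleton_pow,
      Ideal.mem_span_singleton]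
  have haus : ∀ d : O, (∀ n : ℕ, (p : O) ^ n ∣ d) → d = 0 := by
    intro d hd
    refine IsHausdorff.haus (IsAdicComplete.toIsHausdorff (I := I)) d fun n => ?_
    rw [smod_iff n d 0, sub_zero]
    exact hd n
  have haus' : ∀ d : O, (∀ n : ℕ, (p : O) ^ (n + 1) ∣ d) → d = 0 := by
    intro d hd
    exact haus d fun n => dvd_trans (pow_dvd_pow _ (Nat.le_succ n)) (hd n)
  -- existence of limits
  have exLim : ∀ x : WittVector p (PreTilt O p),
      ∃ L : O, ∀ n : ℕ, (p : O) ^ (n + 1) ∣ L - thetaAux p O n x := by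
    intro x
    obtain ⟨L, hL⟩ := IsPrecomplete.prec (IsAdicComplete.toIsPrecomplete (I := I))
      (f := fun n => thetaAux p O n x) (by
        intro m n hmn
        rw [smod_iff]
        have := thetaAux_le p O hmn x
        have h' : (p : O) ^ m ∣ thetaAux p O n x - thetaAux p O m x :=
          dvd_trans (pow_dvd_pow _ (Nat.le_succ m)) this
        rw [show thetaAux p O m x - thetaAux p O n x
            = -(thetaAux p O n x - thetaAux p O m x) by ring]
        exact dvd_neg.mpr h')
    refine ⟨L, fun n => ?_⟩
    have h1 : (p : O) ^ (n + 1) ∣ thetaAux p O (n + 1) x - L := by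
      rw [← smod_iff]; exact hL (n + 1)
    have h2 := thetaAux_succ p O n x
    rw [show L - thetaAux p O n x
        = (thetaAux p O (n + 1) x - thetaAux p O n x)
          - (thetaAux p O (n + 1) x - L) by ring]
    exact dvd_sub h2 h1
  set θf : WittVector p (PreTilt O p) → O := fun x => (exLim x).choose with hθf
  have θf_spec : ∀ x n, (p : O) ^ (n + 1) ∣ θf x - thetaAux p O n x :=
    fun x => (exLim x).choose_spec
  -- θf is a ring hom
  have hone : θf 1 = 1 := by
    refine sub_eq_zero.mp (haus' _ fun n => ?_)
    rw [show θf 1 - 1 = (θf 1 - thetaAux p O n 1)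
        + (thetaAux p O n 1 - 1) by ring]
    exact dvd_add (θf_spec 1 n) (thetaAux_one p O n)
  have hzero : θf 0 = 0 := by
    refine haus' _ fun n => ?_
    rw [show θf 0 = (θf 0 - thetaAux p O n 0) + thetaAux p O n 0 by ring]
    exact dvd_add (θf_spec 0 n) (thetaAux_zero p O n)
  have hadd : ∀ x y, θf (x + y) = θf x + θf y := by
    intro x y
    refine sub_eq_zero.mp (haus' _ fun n => ?_)
    rw [show θf (x + y) - (θf x + θf y)
        = (θf (x + y) - thetaAux p O n (x + y))
          - (θf x - thetaAux p O n x) - (θf y - thetaAux p O n y)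
          + (thetaAux p O n (x + y)
            - (thetaAux p O n x + thetaAux p O n y)) by ring]
    exact dvd_add (dvd_sub (dvd_sub (θf_spec _ n) (θf_spec x n)) (θf_spec y n))
      (thetaAux_add p O n x y)
  have hmul : ∀ x y, θf (x * y) = θf x * θf y := by
    intro x y
    refine sub_eq_zero.mp (haus' _ fun n => ?_)
    rw [show θf (x * y) - θf x * θf y
        = (θf (x * y) - thetaAux p O n (x * y))
          - θf x * (θf y - thetaAux p O n y)
          - thetaAux p O n y * (θf x - thetaAux p O n x)
          + (thetaAux p O n (x * y)
            - thetaAux p O n x * thetaAux p O n y) by ring]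
    exact dvd_add (dvd_sub (dvd_sub (θf_spec _ n) (Dvd.dvd.mul_left (θf_spec y n) _))
      (Dvd.dvd.mul_left (θf_spec x n) _)) (thetaAux_mul p O n x y)
  set θ : WittVector p (PreTilt O p) →+* O :=
    { toFun := θf, map_one' := hone, map_mul' := hmul, map_zero' := hzero,
      map_add' := hadd } with hθ
  have θ_spec : ∀ (x : PreTilt O p) (n : ℕ) (a : O),
      (Ideal.Quotient.mk (Ideal.span {(p : O)}) a : ModP O p) =
          Perfection.coeff (ModP O p) p n x →
        (p : O) ^ (n + 1) ∣ θ (WittVector.teichmuller p x) - a ^ p ^ n := by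
    intro x n a ha
    have h1 := θf_spec (teichmuller p x) n
    have h2 := thetaAux_teichmuller p O n x a ha
    have hθx : θ (teichmuller p x) = θf (teichmuller p x) := rfl
    rw [hθx, show θf (teichmuller p x) - a ^ p ^ n
        = (θf (teichmuller p x) - thetaAux p O n (teichmuller p x))
          - (a ^ p ^ n - thetaAux p O n (teichmuller p x)) by ring]
    exact dvd_sub h1 h2
  refine ⟨θ, θ_spec, ?_⟩
  intro θ' hθ'
  -- θ' agrees with θ on Teichmüller representatives
  have teichEq : ∀ c : PreTilt O p,
      θ' (teichmuller p c) = θ (teichmuller p c) := by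
    intro c
    refine sub_eq_zero.mp (haus' _ fun n => ?_)
    obtain ⟨a, ha⟩ := Ideal.Quotient.mk_surjective
      (I := Ideal.span {(p : O)}) (Perfection.coeff (ModP O p) p n c)
    have h1 := hθ' c n a ha
    have h2 := θ_spec c n a ha
    rw [show θ' (teichmuller p c) - θ (teichmuller p c)
        = (θ' (teichmuller p c) - a ^ p ^ n) - (θ (teichmuller p c) - a ^ p ^ n) by ring]
    exact dvd_sub h1 h2
  have key : ∀ (n : ℕ) (x : WittVector p (PreTilt O p)),
      (p : O) ^ n ∣ θ' x - θ x := by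
    intro n
    induction n with
    | zero => intro x; simpa using dvd_refl _
    | succ n ih =>
      intro x
      obtain ⟨w, hw⟩ := exists_teichmuller_add_p_mul p O x
      rw [hw, map_add, map_add, map_mul, map_mul, map_natCast θ' p, map_natCast θ p, teichEq]
      rw [show θ (teichmuller p (x.coeff 0)) + (p : O) * θ' w
          - (θ (teichmuller p (x.coeff 0)) + (p : O) * θ w)
          = (p : O) * (θ' w - θ w) by ring]
      rw [pow_succ']
      exact mul_dvd_mul_left _ (ih w)
  refine RingHom.ext fun x => sub_eq_zero.mp (haus _ fun n => key n x)
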